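/- arXiv:math/0410338 — 4 statements merged into one kernel-verified Lean document; each statement's English description precedes it below -/
import Mathlib

section
/- Let G be a group, c : G → ℝ subadditive, conjugation-invariant (c(ψφψ^{-1}) = c(φ) for all φ, ψ), with c(1) bounded, and suppose the homogenization μ(φ) = −lim_{k→∞} c(φ^k)/k exists for all φ ∈ G. Suppose φ ∈ G satisfies |c(φ_1⋯φ_kψ) − Σc(φ_i) − c(ψ)| ≤ Ck whenever each φ_i is a conjugate of φ. Then for all ψ ∈ G: |μ(φψ) − μ(φ) − μ(ψ)| ≤ 2C. -/
open Filter

lemma conj_prod_eq {G : Type*} [Group G] (φ ψ : G) (k : ℕ) :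
    (List.ofFn fun i : Fin k => ψ ^ (i : ℕ) * φ * (ψ ^ (i : ℕ))⁻¹).prod
      = (φ * ψ) ^ k * (ψ ^ k)⁻¹ := by
  induction k with
  | zero => simp
  | succ k ih =>
    rw [List.ofFn_succ', List.concat_eq_append, List.prod_append]
    simp only [Fin.coe_castSucc, Fin.val_last, List.prod_cons, List.prod_nil, ih, pow_succ]
    group

/-- Base case of controlled quasi-additivity: if `c` is subadditive,
conjugation-invariant, with `c 1` bounded, whose homogenization
`μ φ = - lim c (φ ^ k) / k` exists, and `φ` satisfies the product estimate
against arbitrary tuples of its conjugates, then `|μ (φψ) - μ φ - μ ψ| ≤ 2C`. -/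
theorem controlled_quasi_additivity_base
    {G : Type*} [Group G] (c : G → ℝ) (μ : G → ℝ) (C : ℝ) (hC : 0 ≤ C)
    (hsub : ∀ φ ψ : G, c (φ * ψ) ≤ c φ + c ψ)
    (hconj : ∀ φ ψ : G, c (ψ * φ * ψ⁻¹) = c φ)
    (hone : ∃ B : ℝ, |c 1| ≤ B)
    (hμ : ∀ φ : G, Tendsto (fun k : ℕ => c (φ ^ k) / k) atTop (nhds (-μ φ)))
    (φ : G)
    (hprod : ∀ (k : ℕ) (φs : Fin k → G) (ψ : G),
      (∀ i, ∃ g : G, φs i = g * φ * g⁻¹) →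
      |c ((List.ofFn φs).prod * ψ) - (∑ i, c (φs i)) - c ψ| ≤ C * k) :
    ∀ ψ : G, |μ (φ * ψ) - μ φ - μ ψ| ≤ 2 * C := by
  intro ψ
  -- Key pointwise estimates
  have key1 : ∀ k : ℕ, |c ((φ * ψ) ^ k) - k * c φ - c (ψ ^ k)| ≤ C * k := by
    intro k
    have h := hprod k (fun i => ψ ^ (i : ℕ) * φ * (ψ ^ (i : ℕ))⁻¹) (ψ ^ k)
      (fun i => ⟨ψ ^ (i : ℕ), rfl⟩)
    have hp : (List.ofFn fun i : Fin k => ψ ^ (i : ℕ) * φ * (ψ ^ (i : ℕ))⁻¹).prod * ψ ^ k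
        = (φ * ψ) ^ k := by
      rw [conj_prod_eq]
      group
    have hs : (∑ i : Fin k, c (ψ ^ (i : ℕ) * φ * (ψ ^ (i : ℕ))⁻¹)) = k * c φ := by
      simp [hconj]
    rwa [hp, hs] at h
  have key2 : ∀ k : ℕ, |c (φ ^ k) - k * c φ - c 1| ≤ C * k := by
    intro k
    have h := hprod k (fun _ => φ) 1 (fun i => ⟨1, by group⟩)
    have hp : (List.ofFn fun _ : Fin k => φ).prod * 1 = φ ^ k := by
      simp [List.ofFn_const]
    have hs : (∑ _i : Fin k, c φ) = k * c φ := by simp [mul_comm]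
    rwa [hp, hs] at h
  -- Divide by k and take limits
  have div1 : ∀ k : ℕ, 1 ≤ k → |c ((φ * ψ) ^ k) / k - c φ - c (ψ ^ k) / k| ≤ C := by
    intro k hk
    have hk0 : (0 : ℝ) < k := by exact_mod_cast hk
    have : c ((φ * ψ) ^ k) / k - c φ - c (ψ ^ k) / k
        = (c ((φ * ψ) ^ k) - k * c φ - c (ψ ^ k)) / k := by field_simp
    rw [this, abs_div, abs_of_pos hk0, div_le_iff₀ hk0]
    exact key1 k
  have div2 : ∀ k : ℕ, 1 ≤ k → |c (φ ^ k) / k - c φ - c 1 / k| ≤ C := by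
    intro k hk
    have hk0 : (0 : ℝ) < k := by exact_mod_cast hk
    have : c (φ ^ k) / k - c φ - c 1 / k
        = (c (φ ^ k) - k * c φ - c 1) / k := by field_simp
    rw [this, abs_div, abs_of_pos hk0, div_le_iff₀ hk0]
    exact key2 k
  have hone_div : Tendsto (fun k : ℕ => c 1 / (k : ℝ)) atTop (nhds 0) :=
    tendsto_const_div_atTop_nhds_zero_nat _
  have lim1 : Tendsto (fun k : ℕ => |c ((φ * ψ) ^ k) / k - c φ - c (ψ ^ k) / k|) atTop
      (nhds |(-μ (φ * ψ)) - c φ - (-μ ψ)|) :=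
    (((hμ (φ * ψ)).sub tendsto_const_nhds).sub (hμ ψ)).abs
  have lim2 : Tendsto (fun k : ℕ => |c (φ ^ k) / k - c φ - c 1 / k|) atTop
      (nhds |(-μ φ) - c φ - 0|) :=
    (((hμ φ).sub tendsto_const_nhds).sub hone_div).abs
  have e1 : |(-μ (φ * ψ)) - c φ - (-μ ψ)| ≤ C :=
    le_of_tendsto lim1 (eventually_atTop.2 ⟨1, div1⟩)
  have e2 : |(-μ φ) - c φ - 0| ≤ C :=
    le_of_tendsto lim2 (eventually_atTop.2 ⟨1, div2⟩)
  rw [abs_le] at e1 e2 ⊢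
  constructor <;> linarith [e1.1, e1.2, e2.1, e2.2]
end

section
/- Let G be a group and μ : G → ℝ a function with μ(φ^m) = mμ(φ) for all m ∈ ℤ_{≥0}. Let ‖·‖ : G → ℤ_{≥0} be a conjugation-invariant norm-like function (‖φψ‖ ≤ ‖φ‖ + ‖ψ‖, ‖φ‖ = 0 iff φ = 1). Suppose for all φ, ψ ≠ 1 with min(‖φ‖, ‖ψ‖) = 1 we have |μ(φψ) − μ(φ) − μ(ψ)| ≤ 2C. Then by induction, for all φ, ψ ≠ 1: |μ(φψ) − μ(φ) − μ(ψ)| ≤ 2C·min(2‖φ‖ − 1, 2‖ψ‖ − 1), provided every φ with ‖φ‖ = m+1 decomposes as φ = φ_m φ_1 with ‖φ_m‖ = m and ‖φ_1‖ = 1. -/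
/-- Induction step of controlled quasi-additivity: given a semi-homogeneous `μ`, a
conjugation-invariant fragmentation norm `ν`, the base estimate for elements of
norm one, and existence of decompositions `φ = φ_m * φ_1`, one gets
`|μ (φψ) - μ φ - μ ψ| ≤ 2C * min (2‖φ‖ - 1) (2‖ψ‖ - 1)` for all `φ, ψ ≠ 1`. -/
theorem controlled_quasi_additivity_induction
    {G : Type*} [Group G] (μ : G → ℝ) (ν : G → ℕ) (C : ℝ) (hC : 0 ≤ C)
    (hhom : ∀ (φ : G) (m : ℕ), μ (φ ^ m) = m * μ φ)
    (hνsub : ∀ φ ψ : G, ν (φ * ψ) ≤ ν φ + ν ψ)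
    (hνzero : ∀ φ : G, ν φ = 0 ↔ φ = 1)
    (hνconj : ∀ φ ψ : G, ν (ψ * φ * ψ⁻¹) = ν φ)
    (hbase : ∀ φ ψ : G, φ ≠ 1 → ψ ≠ 1 → min (ν φ) (ν ψ) = 1 →
      |μ (φ * ψ) - μ φ - μ ψ| ≤ 2 * C)
    (hdecomp : ∀ (φ : G) (m : ℕ), ν φ = m + 1 →
      ∃ a b : G, φ = a * b ∧ ν a = m ∧ ν b = 1) :
    ∀ φ ψ : G, φ ≠ 1 → ψ ≠ 1 →
      |μ (φ * ψ) - μ φ - μ ψ| ≤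
        2 * C * min (2 * (ν φ : ℝ) - 1) (2 * (ν ψ : ℝ) - 1) := by
  have hμ1 : μ (1 : G) = 0 := by simpa using hhom 1 0
  have hν1 : ν (1 : G) = 0 := (hνzero 1).mpr rfl
  have hpos : ∀ φ : G, φ ≠ 1 → 1 ≤ ν φ := by
    intro φ h
    rcases Nat.eq_zero_or_pos (ν φ) with h0 | h1
    · exact absurd ((hνzero φ).mp h0) h
    · exact h1
  have key : ∀ k : ℕ, ∀ φ ψ : G, φ ≠ 1 → ψ ≠ 1 → min (ν φ) (ν ψ) = k →
      |μ (φ * ψ) - μ φ - μ ψ| ≤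
        2 * C * min (2 * (ν φ : ℝ) - 1) (2 * (ν ψ : ℝ) - 1) := by
    intro k
    induction k using Nat.strong_induction_on with
    | _ k IH =>
      intro φ ψ hφ hψ hk
      have hφ1 := hpos φ hφ
      have hψ1 := hpos ψ hψ
      have hφR : (1 : ℝ) ≤ (ν φ : ℝ) := by exact_mod_cast hφ1
      have hψR : (1 : ℝ) ≤ (ν ψ : ℝ) := by exact_mod_cast hψ1
      rcases Nat.lt_or_ge k 2 with hk2 | hk2
      · -- base case : min of the norms is 1
        have hmin1 : min (ν φ) (ν ψ) = 1 := by omega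
        have hb := hbase φ ψ hφ hψ hmin1
        have hminR : (1 : ℝ) ≤ min (2 * (ν φ : ℝ) - 1) (2 * (ν ψ : ℝ) - 1) :=
          le_min (by linarith) (by linarith)
        have hCk : 0 ≤ C * (min (2 * (ν φ : ℝ) - 1) (2 * (ν ψ : ℝ) - 1) - 1) :=
          mul_nonneg hC (by linarith)
        refine hb.trans ?_
        nlinarith [hCk]
      · -- inductive step : k ≥ 2
        have hkφ : k ≤ ν φ := by omega
        have hkψ : k ≤ ν ψ := by omega
        rcases le_or_gt (ν φ) (ν ψ) with hle | hlt
        · -- ν φ ≤ ν ψ, so ν φ = k ; decompose φ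
          have hνφk : ν φ = k := by omega
          obtain ⟨a, b, hab, hνa, hνb⟩ := hdecomp φ (k - 1) (by omega)
          have ha1 : a ≠ 1 := by rintro rfl; omega
          have hb1 : b ≠ 1 := by rintro rfl; omega
          have hνaR : (ν a : ℝ) = (k : ℝ) - 1 := by
            rw [hνa]; push_cast [Nat.cast_sub (by omega : 1 ≤ k)]; ring
          -- goal min bound : 2k - 1 ≤ min(...)
          have hgmin : 2 * (k : ℝ) - 1 ≤ min (2 * (ν φ : ℝ) - 1) (2 * (ν ψ : ℝ) - 1) := by
            have h1 : (k : ℝ) ≤ (ν φ : ℝ) := by exact_mod_cast hkφ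
            have h2 : (k : ℝ) ≤ (ν ψ : ℝ) := by exact_mod_cast hkψ
            exact le_min (by linarith) (by linarith)
          have hprod : 2 * C * (2 * (k : ℝ) - 1) ≤
              2 * C * min (2 * (ν φ : ℝ) - 1) (2 * (ν ψ : ℝ) - 1) :=
            mul_le_mul_of_nonneg_left hgmin (by linarith)
          have hkR : (2 : ℝ) ≤ (k : ℝ) := by exact_mod_cast hk2
          have hCk3 : 0 ≤ C * (2 * (k : ℝ) - 3) := mul_nonneg hC (by linarith)
          by_cases hbψ : b * ψ = 1
          · -- degenerate case ψ = b⁻¹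
            have hψeq : ψ = b⁻¹ := eq_inv_of_mul_eq_one_right hbψ
            have hbinv1 : b⁻¹ ≠ 1 := by
              simpa [hψeq] using hψ
            have h2 := hbase b b⁻¹ hb1 hbinv1 (by have := hpos b⁻¹ hbinv1; omega)
            have hbb : μ (b * b⁻¹) = 0 := by
              have : b * b⁻¹ = 1 := by group
              rw [this, hμ1]
            have h3 := hbase a b ha1 hb1 (by omega)
            have heq : μ (φ * ψ) - μ φ - μ ψ = μ a - μ (a * b) - μ b⁻¹ := by
              have hE : φ * ψ = a := by rw [hab, hψeq]; group
              rw [hE, hab, hψeq]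
            rw [heq, abs_le]
            have h2' := abs_le.mp h2
            have h3' := abs_le.mp h3
            constructor <;> linarith [h2'.1, h2'.2, h3'.1, h3'.2, hprod, hbb, hC, hCk3]
          · -- main case
            have hbψ1 : 1 ≤ ν (b * ψ) := hpos _ hbψ
            have hIH := IH (min (ν a) (ν (b * ψ))) (by omega) a (b * ψ) ha1 hbψ rfl
            have hIH' : |μ (a * (b * ψ)) - μ a - μ (b * ψ)| ≤ 2 * C * (2 * (k : ℝ) - 3) := by
              refine hIH.trans ?_
              have hml : min (2 * (ν a : ℝ) - 1) (2 * (ν (b * ψ) : ℝ) - 1) ≤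
                  2 * (k : ℝ) - 3 := (min_le_left _ _).trans (by rw [hνaR]; ring_nf; linarith)
              exact mul_le_mul_of_nonneg_left hml (by linarith)
            have h2 := hbase b ψ hb1 hψ (by omega)
            have h3 := hbase a b ha1 hb1 (by omega)
            have heq : μ (φ * ψ) - μ φ - μ ψ =
                (μ (a * (b * ψ)) - μ a - μ (b * ψ)) + (μ (b * ψ) - μ b - μ ψ)
                  - (μ (a * b) - μ a - μ b) := by
              rw [hab, mul_assoc]; ring
            rw [heq, abs_le]
            have h1' := abs_le.mp hIH'
            have h2' := abs_le.mp h2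
            have h3' := abs_le.mp h3
            constructor <;>
              linarith [h1'.1, h1'.2, h2'.1, h2'.2, h3'.1, h3'.2, hprod, hC, hCk3]
        · -- ν ψ < ν φ, so ν ψ = k ; decompose ψ
          have hνψk : ν ψ = k := by omega
          obtain ⟨a, b, hab, hνa, hνb⟩ := hdecomp ψ (k - 1) (by omega)
          have ha1 : a ≠ 1 := by rintro rfl; omega
          have hb1 : b ≠ 1 := by rintro rfl; omega
          have hνaR : (ν a : ℝ) = (k : ℝ) - 1 := by
            rw [hνa]; push_cast [Nat.cast_sub (by omega : 1 ≤ k)]; ring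
          have hgmin : 2 * (k : ℝ) - 1 ≤ min (2 * (ν φ : ℝ) - 1) (2 * (ν ψ : ℝ) - 1) := by
            have h1 : (k : ℝ) ≤ (ν φ : ℝ) := by exact_mod_cast hkφ
            have h2 : (k : ℝ) ≤ (ν ψ : ℝ) := by exact_mod_cast hkψ
            exact le_min (by linarith) (by linarith)
          have hprod : 2 * C * (2 * (k : ℝ) - 1) ≤
              2 * C * min (2 * (ν φ : ℝ) - 1) (2 * (ν ψ : ℝ) - 1) :=
            mul_le_mul_of_nonneg_left hgmin (by linarith)
          have hkR : (2 : ℝ) ≤ (k : ℝ) := by exact_mod_cast hk2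
          have hCk3 : 0 ≤ C * (2 * (k : ℝ) - 3) := mul_nonneg hC (by linarith)
          have h3 := hbase a b ha1 hb1 (by omega)
          by_cases hφa : φ * a = 1
          · -- degenerate case φ = a⁻¹
            have hφeq : φ = a⁻¹ := by
              have : a = φ⁻¹ := eq_inv_of_mul_eq_one_right hφa
              rw [this]; group
            have hainv1 : a⁻¹ ≠ 1 := by simpa [hφeq] using hφ
            have hIH := IH (min (ν a) (ν a⁻¹)) (by have := hpos a⁻¹ hainv1; omega)
              a a⁻¹ ha1 hainv1 rfl
            have haa : μ (a * a⁻¹) = 0 := by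
              have : a * a⁻¹ = 1 := by group
              rw [this, hμ1]
            have hIH' : |μ (a * a⁻¹) - μ a - μ a⁻¹| ≤ 2 * C * (2 * (k : ℝ) - 3) := by
              refine hIH.trans ?_
              have hainvR : (1 : ℝ) ≤ (ν a⁻¹ : ℝ) := by
                exact_mod_cast hpos a⁻¹ hainv1
              have hml : min (2 * (ν a : ℝ) - 1) (2 * (ν a⁻¹ : ℝ) - 1) ≤
                  2 * (k : ℝ) - 3 := (min_le_left _ _).trans (by rw [hνaR]; ring_nf; linarith)
              exact mul_le_mul_of_nonneg_left hml (by linarith)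
            have heq : μ (φ * ψ) - μ φ - μ ψ = μ b - μ a⁻¹ - μ (a * b) := by
              have hE : φ * ψ = b := by rw [hab, hφeq]; group
              rw [hE, hab, hφeq]
            rw [heq, abs_le]
            have h1' := abs_le.mp hIH'
            have h3' := abs_le.mp h3
            constructor <;> linarith [h1'.1, h1'.2, h3'.1, h3'.2, hprod, haa, hC, hCk3]
          · -- main case
            have hφa1 : 1 ≤ ν (φ * a) := hpos _ hφa
            have hIH := IH (min (ν φ) (ν a)) (by omega) φ a hφ ha1 rfl
            have hIH' : |μ (φ * a) - μ φ - μ a| ≤ 2 * C * (2 * (k : ℝ) - 3) := by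
              refine hIH.trans ?_
              have hml : min (2 * (ν φ : ℝ) - 1) (2 * (ν a : ℝ) - 1) ≤
                  2 * (k : ℝ) - 3 := (min_le_right _ _).trans (by rw [hνaR]; ring_nf; linarith)
              exact mul_le_mul_of_nonneg_left hml (by linarith)
            have h2 := hbase (φ * a) b hφa hb1 (by omega)
            have heq : μ (φ * ψ) - μ φ - μ ψ =
                (μ (φ * a * b) - μ (φ * a) - μ b) + (μ (φ * a) - μ φ - μ a)
                  - (μ (a * b) - μ a - μ b) := by
              rw [hab, ← mul_assoc]; ring
            rw [heq, abs_le]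
            have h1' := abs_le.mp hIH'
            have h2' := abs_le.mp h2
            have h3' := abs_le.mp h3
            constructor <;>
              linarith [h1'.1, h1'.2, h2'.1, h2'.2, h3'.1, h3'.2, hprod, hC, hCk3]
  intro φ ψ hφ hψ
  exact key _ φ ψ hφ hψ rfl
end

section
/- Let G be a group, μ : G → ℝ with μ(φ^m) = mμ(φ) for m ∈ ℤ_{≥0}, and suppose |μ(αβ) − μ(α) − μ(β)| ≤ K whenever ‖α‖_U = 1 or ‖β‖_U = 1 (for some length function ‖·‖_U with ‖φ^k‖_U ≤ ‖φ‖_U). If φ, θ ∈ G commute and ‖θ^k‖_U = 1 for all k ∈ ℕ, then μ(φθ) = μ(φ) + μ(θ). -/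
/-- Partial additivity from controlled quasi-additivity: if `μ` is
semi-homogeneous, the quasi-additivity defect is bounded by `K` whenever one of
the factors has fragmentation norm `1`, powers do not increase the norm,
`‖θ^k‖_U = 1` for all `k ≥ 1`, and `φ` commutes with `θ`, then
`μ (φθ) = μ φ + μ θ`. -/
theorem partial_additivity
    {G : Type*} [Group G] (μ : G → ℝ) (ν : G → ℕ) (K : ℝ)
    (hhom : ∀ (φ : G) (m : ℕ), μ (φ ^ m) = m * μ φ)
    (hK : ∀ α β : G, (ν α = 1 ∨ ν β = 1) → |μ (α * β) - μ α - μ β| ≤ K)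
    (hνpow : ∀ (φ : G) (k : ℕ), ν (φ ^ k) ≤ ν φ)
    (φ θ : G)
    (hθ : ∀ k : ℕ, 0 < k → ν (θ ^ k) = 1)
    (hcomm : φ * θ = θ * φ) :
    μ (φ * θ) = μ φ + μ θ := by
  set d : ℝ := μ (φ * θ) - μ φ - μ θ with hd
  have key : ∀ k : ℕ, 0 < k → (k : ℝ) * |d| ≤ K := by
    intro k hk
    have hc : Commute φ θ := hcomm
    have hpow : (φ * θ) ^ k = φ ^ k * θ ^ k := hc.mul_pow k
    have h1 := hK (φ ^ k) (θ ^ k) (Or.inr (hθ k hk))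
    rw [← hpow, hhom (φ * θ) k, hhom φ k, hhom θ k] at h1
    have : (k : ℝ) * μ (φ * θ) - (k : ℝ) * μ φ - (k : ℝ) * μ θ = (k : ℝ) * d := by
      rw [hd]; ring
    rw [this, abs_mul, abs_of_nonneg (by positivity : (0:ℝ) ≤ (k:ℝ))] at h1
    exact h1
  have hd0 : |d| = 0 := by
    by_contra h
    have hpos : 0 < |d| := lt_of_le_of_ne (abs_nonneg d) (Ne.symm h)
    obtain ⟨n, hn⟩ := exists_nat_gt (K / |d|)
    have hn1 : 0 < n + 1 := Nat.succ_pos n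
    have := key (n + 1) hn1
    have hlt : K / |d| < ((n + 1 : ℕ) : ℝ) := by
      push_cast; linarith
    have : K < ((n + 1 : ℕ) : ℝ) * |d| := by
      rwa [div_lt_iff₀ hpos] at hlt
    linarith [key (n + 1) hn1]
  have : d = 0 := abs_eq_zero.mp hd0
  rw [hd] at this; linarith
end

section
/- If X ⊆ M and Y ⊆ N are stems (fibers of finite-dimensional Poisson-commutative subspaces all of whose other fibers are displaceable) in closed symplectic manifolds M and N, then X × Y is a stem in M × N with the product symplectic structure. -/
/-- `X` is a stem with respect to a Poisson-commutation relation `P` on functions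
and a displaceability predicate `D`: it is a fiber of the moment map of a
finite-dimensional Poisson-commutative subspace (spanned by `F 0, …, F (n-1)`)
all of whose other fibers are displaceable. -/
def IsStem {M : Type*} (P : (M → ℝ) → (M → ℝ) → Prop) (D : Set M → Prop)
    (X : Set M) : Prop :=
  ∃ (n : ℕ) (F : Fin n → M → ℝ) (p : Fin n → ℝ),
    (∀ i j, P (F i) (F j)) ∧
    X = {x | ∀ i, F i x = p i} ∧
    ∀ q : Fin n → ℝ, q ≠ p → D {x | ∀ i, F i x = q i}

/-- A product of stems is a stem: if products of displaceable sets with arbitrary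
sets are displaceable in the product, and lifts of Poisson-commuting functions
from the factors Poisson-commute in the product, then `X × Y` is a stem in
`M × N` whenever `X`, `Y` are stems in `M`, `N`. -/
theorem isStem_prod
    {M N : Type*}
    (PM : (M → ℝ) → (M → ℝ) → Prop) (PN : (N → ℝ) → (N → ℝ) → Prop)
    (PMN : (M × N → ℝ) → (M × N → ℝ) → Prop)
    (DM : Set M → Prop) (DN : Set N → Prop) (DMN : Set (M × N) → Prop)
    (hDM : ∀ (A : Set M) (B : Set N), DM A → DMN (A ×ˢ B))
    (hDN : ∀ (A : Set M) (B : Set N), DN B → DMN (A ×ˢ B))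
    (hlift₁ : ∀ F G : M → ℝ, PM F G → PMN (F ∘ Prod.fst) (G ∘ Prod.fst))
    (hlift₂ : ∀ F G : N → ℝ, PN F G → PMN (F ∘ Prod.snd) (G ∘ Prod.snd))
    (hcross : ∀ (F : M → ℝ) (G : N → ℝ),
      PMN (F ∘ Prod.fst) (G ∘ Prod.snd) ∧ PMN (G ∘ Prod.snd) (F ∘ Prod.fst))
    {X : Set M} {Y : Set N}
    (hX : IsStem PM DM X) (hY : IsStem PN DN Y) :
    IsStem PMN DMN (X ×ˢ Y) := by
  obtain ⟨m, F, p, hFcomm, hXeq, hXdisp⟩ := hX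
  obtain ⟨n, G, q, hGcomm, hYeq, hYdisp⟩ := hY
  refine ⟨m + n,
    Fin.addCases (fun i => F i ∘ Prod.fst) (fun j => G j ∘ Prod.snd),
    Fin.addCases p q, ?_, ?_, ?_⟩
  · intro i j
    refine Fin.addCases (fun i => ?_) (fun i => ?_) i <;>
      refine Fin.addCases (fun j => ?_) (fun j => ?_) j <;>
      simp only [Fin.addCases_left, Fin.addCases_right]
    · exact hlift₁ _ _ (hFcomm i j)
    · exact (hcross (F i) (G j)).1
    · exact (hcross (F j) (G i)).2
    · exact hlift₂ _ _ (hGcomm i j)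
  · ext ⟨x, y⟩
    simp only [Set.mem_prod, hXeq, hYeq, Set.mem_setOf_eq]
    constructor
    · rintro ⟨hx, hy⟩ k
      refine Fin.addCases (fun i => ?_) (fun j => ?_) k <;>
        simp only [Fin.addCases_left, Fin.addCases_right, Function.comp_apply]
      · exact hx i
      · exact hy j
    · intro h
      constructor
      · intro i; have := h (Fin.castAdd n i)
        simpa using this
      · intro j; have := h (Fin.natAdd m j)
        simpa using this
  · intro r hr
    have hset : {z : M × N | ∀ k,
        Fin.addCases (fun i => F i ∘ Prod.fst) (fun j => G j ∘ Prod.snd) k z = r k} =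
        {x | ∀ i, F i x = r (Fin.castAdd n i)} ×ˢ {y | ∀ j, G j y = r (Fin.natAdd m j)} := by
      ext ⟨x, y⟩
      simp only [Set.mem_prod, Set.mem_setOf_eq]
      constructor
      · intro h
        refine ⟨fun i => ?_, fun j => ?_⟩
        · have := h (Fin.castAdd n i); simpa using this
        · have := h (Fin.natAdd m j); simpa using this
      · rintro ⟨h1, h2⟩ k
        refine Fin.addCases (fun i => ?_) (fun j => ?_) k <;>
          simp only [Fin.addCases_left, Fin.addCases_right, Function.comp_apply]
        · exact h1 i
        · exact h2 j
    rw [hset]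
    by_cases h1 : (fun i => r (Fin.castAdd n i)) = p
    · have h2 : (fun j => r (Fin.natAdd m j)) ≠ q := by
        intro h2
        apply hr
        ext k
        refine Fin.addCases (fun i => ?_) (fun j => ?_) k <;>
          simp only [Fin.addCases_left, Fin.addCases_right]
        · exact congrFun h1 i
        · exact congrFun h2 j
      exact hDN _ _ (hYdisp _ h2)
    · exact hDM _ _ (hXdisp _ h1)
end
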